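/- arXiv:1605.08550 — 7 statements merged into one kernel-verified Lean document; each statement's English description precedes it below -/
import Mathlib

section
/- For the surface of revolution in ℝ³ parameterized by X(ρ,v) = (ρ cos v, ρ sin v, t(ρ)) with t'(ρ) = 1/√(C₁ρ^{2/3}−1), the mean curvature function equals f(ρ) = 2/(3√C₁ · ρ^{4/3}), which is positive for all ρ > C₁^{−3/2}. -/
open Real Set

/-- for the surface of revolution `(ρ cos v, ρ sin v, t ρ)` with
`t'(ρ) = 1/√(C₁ ρ^{2/3} − 1)`, the mean curvature
`f(ρ) = (1+(t')²)^{-3/2}·(t'' + t'(1+(t')²)/ρ)` equals `2/(3 √C₁ ρ^{4/3}) > 0`. -/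
theorem mean_curvature_revolution (C₁ : ℝ) (hC₁ : 0 < C₁)
    (t' : ℝ → ℝ)
    (ht' : ∀ ρ, t' ρ = 1 / Real.sqrt (C₁ * ρ ^ ((2:ℝ)/3) - 1)) :
    ∀ ρ ∈ Ioi (C₁ ^ (-(3:ℝ)/2)),
      (1 + (t' ρ) ^ 2) ^ (-(3:ℝ)/2) *
          (deriv t' ρ + t' ρ * (1 + (t' ρ) ^ 2) / ρ)
        = 2 / (3 * Real.sqrt C₁ * ρ ^ ((4:ℝ)/3)) ∧
      0 < 2 / (3 * Real.sqrt C₁ * ρ ^ ((4:ℝ)/3)) := by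
  intro ρ hρ
  rw [mem_Ioi] at hρ
  have hρ0 : 0 < ρ := lt_trans (Real.rpow_pos_of_pos hC₁ _) hρ
  -- u := C₁ ρ^{2/3} - 1 > 0
  have hu : 0 < C₁ * ρ ^ ((2:ℝ)/3) - 1 := by
    have h1 : (C₁ ^ (-(3:ℝ)/2)) ^ ((2:ℝ)/3) < ρ ^ ((2:ℝ)/3) :=
      Real.rpow_lt_rpow (Real.rpow_pos_of_pos hC₁ _).le hρ (by norm_num)
    have h2 : (C₁ ^ (-(3:ℝ)/2)) ^ ((2:ℝ)/3) = C₁⁻¹ := by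
      rw [← Real.rpow_mul hC₁.le]
      norm_num
      rw [Real.rpow_neg_one]
    have h3 : C₁⁻¹ < ρ ^ ((2:ℝ)/3) := h2 ▸ h1
    have := (mul_lt_mul_iff_right₀ hC₁).mpr h3
    rw [mul_inv_cancel₀ hC₁.ne'] at this
    linarith
  -- abbreviations
  set s : ℝ := Real.sqrt (C₁ * ρ ^ ((2:ℝ)/3) - 1) with hs_def
  have hs0 : 0 < s := Real.sqrt_pos.mpr hu
  have hs2 : s ^ 2 = C₁ * ρ ^ ((2:ℝ)/3) - 1 := Real.sq_sqrt hu.le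
  set c : ℝ := Real.sqrt C₁ with hc_def
  have hc0 : 0 < c := Real.sqrt_pos.mpr hC₁
  have hc2 : c ^ 2 = C₁ := Real.sq_sqrt hC₁.le
  set p : ℝ := ρ ^ ((1:ℝ)/3) with hp_def
  have hp0 : 0 < p := Real.rpow_pos_of_pos hρ0 _
  have hp2 : ρ ^ ((2:ℝ)/3) = p ^ 2 := by
    rw [hp_def, ← Real.rpow_natCast (ρ ^ ((1:ℝ)/3)) 2, ← Real.rpow_mul hρ0.le]
    norm_num
  have hp3 : ρ = p ^ 3 := by
    rw [hp_def, ← Real.rpow_natCast (ρ ^ ((1:ℝ)/3)) 3, ← Real.rpow_mul hρ0.le]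
    norm_num
  have hp4 : ρ ^ ((4:ℝ)/3) = p ^ 4 := by
    rw [hp_def, ← Real.rpow_natCast (ρ ^ ((1:ℝ)/3)) 4, ← Real.rpow_mul hρ0.le]
    norm_num
  -- derivative of t'
  have hderiv : deriv t' ρ
      = -(C₁ * ((2:ℝ)/3 * ρ ^ ((2:ℝ)/3 - 1)) / (2 * s)) / s ^ 2 := by
    have hfun : t' = fun x => (Real.sqrt (C₁ * x ^ ((2:ℝ)/3) - 1))⁻¹ := by
      funext x; rw [ht' x, one_div]
    have hu' : HasDerivAt (fun x : ℝ => C₁ * x ^ ((2:ℝ)/3) - 1)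
        (C₁ * ((2:ℝ)/3 * ρ ^ ((2:ℝ)/3 - 1))) ρ :=
      (((Real.hasDerivAt_rpow_const (Or.inl hρ0.ne'))).const_mul C₁).sub_const 1
    have hsq : HasDerivAt (fun x : ℝ => Real.sqrt (C₁ * x ^ ((2:ℝ)/3) - 1))
        (C₁ * ((2:ℝ)/3 * ρ ^ ((2:ℝ)/3 - 1)) / (2 * s)) ρ := by
      have := (Real.hasDerivAt_sqrt hu.ne').comp ρ hu'
      simpa [div_eq_mul_inv, mul_comm, Function.comp_def, hs_def] using this
    have hinv : HasDerivAt (fun x : ℝ => (Real.sqrt (C₁ * x ^ ((2:ℝ)/3) - 1))⁻¹)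
        (-(C₁ * ((2:ℝ)/3 * ρ ^ ((2:ℝ)/3 - 1)) / (2 * s)) / s ^ 2) ρ :=
      hsq.inv hs0.ne'
    rw [hfun]
    exact hinv.deriv
  -- the rpow factor
  have ha : 1 + (1 / s) ^ 2 = (c * p / s) ^ 2 := by
    field_simp
    nlinarith [hs2, hc2, hp2]
  have hrpow : (1 + (t' ρ) ^ 2) ^ (-(3:ℝ)/2) = ((c * p / s) ^ 3)⁻¹ := by
    rw [ht' ρ, ← hs_def, ha, ← Real.rpow_natCast (c * p / s) 2,
      ← Real.rpow_mul (by positivity)]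
    norm_num
  have hρ13 : ρ ^ ((2:ℝ)/3 - 1) = p ^ 2 / p ^ 3 := by
    rw [show (2:ℝ)/3 - 1 = (2:ℝ)/3 + (-1) by ring, Real.rpow_add hρ0,
      Real.rpow_neg_one, hp2, ← hp3]
    ring
  refine ⟨?_, by positivity⟩
  rw [hrpow, hderiv, ht' ρ, ← hs_def, ha, hρ13, hp4, hp3]
  have hC₁eq : C₁ = c ^ 2 := hc2.symm
  rw [hC₁eq]
  field_simp
  ring
end

section
/- Let L(k) = −16/9 − 16k² + C₁k^{3/2} for k > 0. If C₁ > 64/3^{5/4}, then there exist exactly two points 0 < k₀₁ < (3C₁/64)² < k₀₂ with L(k₀₁) = L(k₀₂) = 0, and L(k) > 0 for all k ∈ (k₀₁, k₀₂). -/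
open Real Set

lemma rpow_three_halves_sq (t : ℝ) (ht : 0 ≤ t) :
    (t ^ 2 : ℝ) ^ ((3:ℝ)/2) = t ^ 3 := by
  have h2 : (t:ℝ) ^ (2:ℕ) = t ^ ((2:ℕ):ℝ) := (Real.rpow_natCast t 2).symm
  rw [h2, ← Real.rpow_natCast t 3, ← Real.rpow_mul ht]
  norm_num

/-- `L(k) = −16/9 − 16k² + C₁ k^{3/2}` on `(0,∞)`, with `C₁ > 64/3^{5/4}`,
has exactly two zeros `0 < k₀₁ < (3C₁/64)² < k₀₂`, and `L > 0` on `(k₀₁, k₀₂)`. -/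
theorem L_two_zeros (C₁ : ℝ) (hC₁ : C₁ > 64 / (3:ℝ) ^ ((5:ℝ)/4))
    (L : ℝ → ℝ)
    (hL : ∀ k, L k = -16/9 - 16 * k ^ 2 + C₁ * k ^ ((3:ℝ)/2)) :
    ∃ k₀₁ k₀₂ : ℝ,
      0 < k₀₁ ∧ k₀₁ < (3 * C₁ / 64) ^ 2 ∧ (3 * C₁ / 64) ^ 2 < k₀₂ ∧
      L k₀₁ = 0 ∧ L k₀₂ = 0 ∧
      (∀ k ∈ Ioo k₀₁ k₀₂, 0 < L k) ∧
      (∀ k : ℝ, 0 < k → L k = 0 → k = k₀₁ ∨ k = k₀₂) := by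
  -- positivity of C₁
  have h3pos : (0:ℝ) < (3:ℝ) ^ ((5:ℝ)/4) := Real.rpow_pos_of_pos (by norm_num) _
  have hC₁pos : 0 < C₁ := lt_trans (by positivity) hC₁
  -- the quartic
  set g : ℝ → ℝ := fun t => C₁ * t ^ 3 - 16 * t ^ 4 - 16/9 with hg
  set ts : ℝ := 3 * C₁ / 64 with hts
  have htspos : 0 < ts := by positivity
  -- L (t^2) = g t for t ≥ 0
  have hLg : ∀ t : ℝ, 0 ≤ t → L (t ^ 2) = g t := by
    intro t ht
    rw [hL, rpow_three_halves_sq t ht]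
    simp only [hg]
    ring
  -- g ts > 0
  have hC4 : C₁ ^ 4 > (64 / (3:ℝ) ^ ((5:ℝ)/4)) ^ 4 := by
    apply pow_lt_pow_left₀ hC₁ (by positivity)
    norm_num
  have h35 : ((3:ℝ) ^ ((5:ℝ)/4)) ^ (4:ℕ) = 243 := by
    rw [← Real.rpow_natCast ((3:ℝ) ^ ((5:ℝ)/4)) 4, ← Real.rpow_mul (by norm_num)]
    norm_num
  have hC4' : C₁ ^ 4 > 64 ^ 4 / 243 := by
    calc C₁ ^ 4 > (64 / (3:ℝ) ^ ((5:ℝ)/4)) ^ 4 := hC4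
    _ = 64 ^ 4 / ((3:ℝ) ^ ((5:ℝ)/4)) ^ 4 := by rw [div_pow]
    _ = 64 ^ 4 / 243 := by rw [h35]
  have hgts : 0 < g ts := by
    have : g ts = 27 * C₁ ^ 4 / 1048576 - 16/9 := by
      simp only [hg, hts]; ring
    rw [this]
    nlinarith [hC4']
  -- derivative of g
  have hderiv : ∀ t : ℝ, HasDerivAt g (3 * C₁ * t ^ 2 - 64 * t ^ 3) t := by
    intro t
    have h := (((hasDerivAt_pow 3 t).const_mul C₁).sub
      ((hasDerivAt_pow 4 t).const_mul 16)).sub_const (16/9)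
    refine h.congr_deriv ?_
    push_cast
    ring
  have hcont : Continuous g := by
    simp only [hg]; continuity
  -- strict mono on [0, ts]
  have hmono : StrictMonoOn g (Icc 0 ts) := by
    apply strictMonoOn_of_deriv_pos (convex_Icc 0 ts) hcont.continuousOn
    intro t ht
    rw [interior_Icc] at ht
    rw [(hderiv t).deriv]
    have h1 : 0 < t := ht.1
    have h2 : t < 3 * C₁ / 64 := by rw [← hts]; exact ht.2
    have h3 : 0 < 3 * C₁ - 64 * t := by linarith
    nlinarith [mul_pos (mul_pos h1 h1) h3]
  -- strict anti on [ts, ∞)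
  have hanti : StrictAntiOn g (Ici ts) := by
    apply strictAntiOn_of_deriv_neg (convex_Ici ts) hcont.continuousOn
    intro t ht
    rw [interior_Ici] at ht
    rw [(hderiv t).deriv]
    have h1 : 3 * C₁ / 64 < t := by rw [hts] at ht; exact ht
    have h0 : 0 < t := lt_trans htspos ht
    have h3 : 0 < 64 * t - 3 * C₁ := by linarith
    nlinarith [mul_pos (mul_pos h0 h0) h3]
  -- zero t₁ in (0, ts)
  have hg0 : g 0 < 0 := by simp [hg]
  obtain ⟨t₁, ht₁mem, ht₁⟩ : ∃ t ∈ Ioo (0:ℝ) ts, g t = 0 := by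
    have := intermediate_value_Ioo (le_of_lt htspos) hcont.continuousOn
      (a := 0) (b := ts) (show (0:ℝ) ∈ Ioo (g 0) (g ts) from ⟨hg0, hgts⟩)
    obtain ⟨t, htm, hte⟩ := this
    exact ⟨t, htm, hte⟩
  -- zero t₂ in (ts, T) with T = C₁/16
  have hT : ts < C₁ / 16 := by
    rw [hts]; nlinarith
  have hgT : g (C₁ / 16) < 0 := by
    simp only [hg]
    nlinarith [pow_pos hC₁pos 3, pow_pos hC₁pos 4]
  obtain ⟨t₂, ht₂mem, ht₂⟩ : ∃ t ∈ Ioo ts (C₁/16), g t = 0 := by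
    have := intermediate_value_Ioo' (le_of_lt hT) hcont.continuousOn
      (a := ts) (b := C₁/16) (show (0:ℝ) ∈ Ioo (g (C₁/16)) (g ts) from ⟨hgT, hgts⟩)
    obtain ⟨t, htm, hte⟩ := this
    exact ⟨t, htm, hte⟩
  have ht₁pos : 0 < t₁ := ht₁mem.1
  have ht₁lt : t₁ < ts := ht₁mem.2
  have ht₂gt : ts < t₂ := ht₂mem.1
  have ht₂pos : 0 < t₂ := lt_trans htspos ht₂gt
  -- g positive on (t₁, t₂)
  have hgpos : ∀ t, t₁ < t → t < t₂ → 0 < g t := by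
    intro t hlt hgt
    rcases le_or_gt t ts with h | h
    · have := hmono ⟨le_of_lt ht₁pos, le_of_lt ht₁lt⟩
        ⟨le_of_lt (lt_trans ht₁pos hlt), h⟩ hlt
      rwa [ht₁] at this
    · have := hanti (le_of_lt h) (le_of_lt ht₂gt) hgt
      rwa [ht₂] at this
  refine ⟨t₁ ^ 2, t₂ ^ 2, by positivity, ?_, ?_, ?_, ?_, ?_, ?_⟩
  · exact pow_lt_pow_left₀ ht₁lt (le_of_lt ht₁pos) (by norm_num)
  · exact pow_lt_pow_left₀ ht₂gt (le_of_lt htspos) (by norm_num)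
  · rw [hLg t₁ (le_of_lt ht₁pos)]; exact ht₁
  · rw [hLg t₂ (le_of_lt ht₂pos)]; exact ht₂
  · intro k hk
    have hkpos : 0 < k := lt_trans (by positivity) hk.1
    set t := Real.sqrt k with htdef
    have htk : t ^ 2 = k := Real.sq_sqrt (le_of_lt hkpos)
    have htpos : 0 ≤ t := Real.sqrt_nonneg k
    have hlt : t₁ < t := by
      have := Real.sqrt_lt_sqrt (by positivity) hk.1
      rwa [Real.sqrt_sq (le_of_lt ht₁pos)] at this
    have hgt : t < t₂ := by
      have := Real.sqrt_lt_sqrt (le_of_lt hkpos) hk.2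
      rwa [Real.sqrt_sq (le_of_lt ht₂pos)] at this
    have := hgpos t hlt hgt
    rw [← htk, hLg t htpos]
    exact this
  · intro k hkpos hLk
    set t := Real.sqrt k with htdef
    have htk : t ^ 2 = k := Real.sq_sqrt (le_of_lt hkpos)
    have htpos : 0 ≤ t := Real.sqrt_nonneg k
    have hgt0 : g t = 0 := by rw [← hLg t htpos, htk]; exact hLk
    rcases le_or_gt t ts with h | h
    · left
      have : t = t₁ := by
        apply hmono.injOn ⟨htpos, h⟩ ⟨le_of_lt ht₁pos, le_of_lt ht₁lt⟩
        rw [hgt0, ht₁]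
      rw [← htk, this]
    · right
      have : t = t₂ := by
        apply hanti.injOn (le_of_lt h) (le_of_lt ht₂gt)
        rw [hgt0, ht₂]
      rw [← htk, this]
end

section
/- Every solution φ of the ODE 3φ''' + 2φ'φ'' = 0 on an open interval with φ'' > 0 everywhere is, up to translation of the variable and addition of a constant and rescaling u ↦ u/3, of the form φ(u) = 3·log(cosh(u/3)) + b. -/
open Real Set

private lemma const_of_hasDerivAt_zero {I : Set ℝ} (hI : IsOpen I) (hc : Convex ℝ I)
    {f : ℝ → ℝ} (hf : ∀ u ∈ I, HasDerivAt f 0 u) {x y : ℝ} (hx : x ∈ I) (hy : y ∈ I) :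
    f x = f y := by
  refine hc.is_const_of_fderivWithin_eq_zero
    (fun u hu => ((hf u hu).differentiableAt).differentiableWithinAt) (fun u hu => ?_) hx hy
  have h1 := ((hf u hu).hasFDerivAt.hasFDerivWithinAt).fderivWithin (hI.uniqueDiffOn u hu)
  rw [h1]
  ext z
  simp

set_option maxHeartbeats 1000000 in
/-- every `C³` solution of `3φ''' + 2φ'φ'' = 0` with `φ'' > 0` on an open
interval is, up to a translation of the variable, a rescaling `u ↦ u/3` (by a nonzero
factor `a`), and addition of a constant, of the form `φ(u) = 3 log(cosh(u/3)) + b`. -/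
theorem ode_solution_form (I : Set ℝ) (hI : IsOpen I) (hI' : I.OrdConnected)
    (φ : ℝ → ℝ) (hφ : ContDiffOn ℝ 3 φ I)
    (hode : ∀ u ∈ I, 3 * deriv (deriv (deriv φ)) u + 2 * deriv φ u * deriv (deriv φ) u = 0)
    (hconv : ∀ u ∈ I, 0 < deriv (deriv φ) u) :
    ∃ a u₀ b : ℝ, a ≠ 0 ∧
      ∀ u ∈ I, φ u = 3 * Real.log (Real.cosh (a * (u - u₀) / 3)) + b := by
  rcases I.eq_empty_or_nonempty with hIe | ⟨u₁, hu₁⟩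
  · exact ⟨1, 0, 0, one_ne_zero, fun u hu => absurd hu (by rw [hIe]; exact notMem_empty u)⟩
  have hcvx : Convex ℝ I := convex_iff_ordConnected.mpr hI'
  set g := deriv φ with hgdef
  set h := deriv g with hhdef
  -- regularity
  have hreg1 : ContDiffOn ℝ 2 g I := hφ.deriv_of_isOpen hI (by norm_num)
  have hreg2 : ContDiffOn ℝ 1 h I := hreg1.deriv_of_isOpen hI (by norm_num)
  have hdφ : ∀ u ∈ I, HasDerivAt φ (g u) u := fun u hu =>
    ((hφ.differentiableOn (by norm_num)).differentiableAt (hI.mem_nhds hu)).hasDerivAt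
  have hdg : ∀ u ∈ I, HasDerivAt g (h u) u := fun u hu =>
    ((hreg1.differentiableOn (by norm_num)).differentiableAt (hI.mem_nhds hu)).hasDerivAt
  have hdh : ∀ u ∈ I, HasDerivAt h (deriv h u) u := fun u hu =>
    ((hreg2.differentiableOn (by norm_num)).differentiableAt (hI.mem_nhds hu)).hasDerivAt
  -- the first integral 3 h + g ^ 2 is constant
  set ψ : ℝ → ℝ := fun u => 3 * h u + g u ^ 2 with hψdef
  have hdψ : ∀ u ∈ I, HasDerivAt ψ 0 u := by
    intro u hu
    have h1 := ((hdh u hu).const_mul 3).add ((hdg u hu).pow 2)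
    have h2 := hode u hu
    refine h1.congr_deriv ?_
    push_cast
    ring_nf
    ring_nf at h2
    linarith
  set C := ψ u₁ with hCdef
  have hψC : ∀ u ∈ I, 3 * h u + g u ^ 2 = C := fun u hu =>
    const_of_hasDerivAt_zero hI hcvx hdψ hu hu₁
  have hCpos : 0 < C := by
    have h1 := hconv u₁ hu₁
    have h2 := hψC u₁ hu₁
    nlinarith [sq_nonneg (g u₁)]
  set μ : ℝ := Real.sqrt C / 3 with hμdef
  have hμpos : 0 < μ := by positivity
  have hμsq : μ ^ 2 = C / 9 := by
    rw [hμdef, div_pow, Real.sq_sqrt hCpos.le]; norm_num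
  -- F = exp(φ/3) satisfies F'' = μ² F
  set F : ℝ → ℝ := fun u => Real.exp (φ u / 3) with hFdef
  have hFpos : ∀ u, 0 < F u := fun u => Real.exp_pos _
  set P : ℝ → ℝ := fun u => Real.exp (φ u / 3) * (g u / 3) with hPdef
  have hdF : ∀ u ∈ I, HasDerivAt F (P u) u := fun u hu => ((hdφ u hu).div_const 3).exp
  have hdP : ∀ u ∈ I, HasDerivAt P (μ ^ 2 * F u) u := by
    intro u hu
    have h1 := (hdF u hu).mul ((hdg u hu).div_const 3)
    refine h1.congr_deriv ?_
    have h2 := hψC u hu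
    have h3 : C = 3 * h u + g u ^ 2 := h2.symm
    rw [hμsq, h3, hPdef, hFdef]
    simp only
    ring
  -- decompose F into exponentials
  set α : ℝ → ℝ := fun u => (F u + P u / μ) / 2 * Real.exp (-(μ * u)) with hαdef
  set β : ℝ → ℝ := fun u => (F u - P u / μ) / 2 * Real.exp (μ * u) with hβdef
  have hdα : ∀ u ∈ I, HasDerivAt α 0 u := by
    intro u hu
    have h1 : HasDerivAt (fun u : ℝ => Real.exp (-(μ * u))) (Real.exp (-(μ * u)) * (-μ)) u := by
      simpa using (((hasDerivAt_id u).const_mul μ).neg).exp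
    have h2 := ((((hdF u hu).add ((hdP u hu).div_const μ)).div_const 2)).mul h1
    refine h2.congr_deriv ?_
    simp only [Pi.add_apply, Pi.sub_apply]
    field_simp
    ring
  have hdβ : ∀ u ∈ I, HasDerivAt β 0 u := by
    intro u hu
    have h1 : HasDerivAt (fun u : ℝ => Real.exp (μ * u)) (Real.exp (μ * u) * μ) u := by
      simpa using ((hasDerivAt_id u).const_mul μ).exp
    have h2 := ((((hdF u hu).sub ((hdP u hu).div_const μ)).div_const 2)).mul h1
    refine h2.congr_deriv ?_
    simp only [Pi.add_apply, Pi.sub_apply]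
    field_simp
    ring
  set A := α u₁ with hAdef
  set B := β u₁ with hBdef
  have hαA : ∀ u ∈ I, α u = A := fun u hu => const_of_hasDerivAt_zero hI hcvx hdα hu hu₁
  have hβB : ∀ u ∈ I, β u = B := fun u hu => const_of_hasDerivAt_zero hI hcvx hdβ hu hu₁
  have hFsum : ∀ u ∈ I, F u = A * Real.exp (μ * u) + B * Real.exp (-(μ * u)) := by
    intro u hu
    rw [← hαA u hu, ← hβB u hu, hαdef, hβdef]
    simp only
    rw [Real.exp_neg]
    have he : Real.exp (μ * u) ≠ 0 := (Real.exp_pos _).ne'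
    field_simp
    ring
  -- A, B > 0
  have hABpos : 0 < A * B := by
    have h1 : A * B = (F u₁ ^ 2 - (P u₁ / μ) ^ 2) / 4 := by
      rw [hAdef, hBdef, hαdef, hβdef]
      simp only
      rw [Real.exp_neg]
      have he : Real.exp (μ * u₁) ≠ 0 := (Real.exp_pos _).ne'
      field_simp
      ring
    have h2 : μ ^ 2 * F u₁ ^ 2 - P u₁ ^ 2 = F u₁ ^ 2 * h u₁ / 3 := by
      have h3 := hψC u₁ hu₁
      rw [hμsq, hPdef, hFdef]
      simp only
      nlinarith [Real.exp_pos (φ u₁ / 3)]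
    have h4 : 0 < μ ^ 2 * F u₁ ^ 2 - P u₁ ^ 2 := by
      rw [h2]
      have := hconv u₁ hu₁
      positivity
    have hμ2 : (0:ℝ) < μ ^ 2 := by positivity
    rw [h1, div_pow]
    apply div_pos _ (by norm_num : (0:ℝ) < 4)
    rw [sub_pos, div_lt_iff₀ hμ2]
    nlinarith
  have hApos : 0 < A := by
    by_contra hA
    push_neg at hA
    have hAne : A ≠ 0 := by
      intro h0; rw [h0] at hABpos; simp at hABpos
    have hAlt : A < 0 := lt_of_le_of_ne hA hAne
    have hBlt : B < 0 := by nlinarith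
    have := hFsum u₁ hu₁
    nlinarith [Real.exp_pos (μ * u₁), Real.exp_pos (-(μ * u₁)), hFpos u₁]
  have hBpos : 0 < B := by nlinarith
  -- assemble the answer
  clear_value A B
  refine ⟨Real.sqrt C, Real.log (B / A) / (2 * μ), 3 * Real.log (2 * Real.sqrt (A * B)),
    (Real.sqrt_pos.mpr hCpos).ne', ?_⟩
  intro u hu
  set u₀ := Real.log (B / A) / (2 * μ) with hu₀def
  have hμu₀ : μ * u₀ = Real.log (B / A) / 2 := by
    rw [hu₀def]; field_simp
  have hsqAB : 0 < Real.sqrt (A * B) := Real.sqrt_pos.mpr hABpos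
  -- exp(-μu₀) = √(A/B), exp(μu₀) = √(B/A)
  have he1 : Real.sqrt (A * B) * Real.exp (-(μ * u₀)) = A := by
    have hsq : Real.exp (-(μ * u₀)) ^ 2 = A / B := by
      rw [← Real.exp_nat_mul]
      rw [hμu₀]
      have hlog : Real.log (A / B) = - Real.log (B / A) := by
        rw [show A / B = (B / A)⁻¹ from (inv_div B A).symm, Real.log_inv]
      have : ((2:ℕ):ℝ) * -(Real.log (B / A) / 2) = Real.log (A / B) := by
        rw [hlog]; push_cast; ring
      rw [this, Real.exp_log (by positivity)]
    have : Real.exp (-(μ * u₀)) = Real.sqrt (A / B) := by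
      rw [← Real.sqrt_sq (Real.exp_pos _).le, hsq]
    rw [this, ← Real.sqrt_mul hABpos.le]
    rw [show A * B * (A / B) = A ^ 2 by field_simp]
    exact Real.sqrt_sq hApos.le
  have he2 : Real.sqrt (A * B) * Real.exp (μ * u₀) = B := by
    have hsq : Real.exp (μ * u₀) ^ 2 = B / A := by
      rw [← Real.exp_nat_mul, hμu₀]
      rw [show ((2:ℕ):ℝ) * (Real.log (B / A) / 2) = Real.log (B / A) by push_cast; ring]
      exact Real.exp_log (by positivity)
    have : Real.exp (μ * u₀) = Real.sqrt (B / A) := by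
      rw [← Real.sqrt_sq (Real.exp_pos _).le, hsq]
    rw [this, ← Real.sqrt_mul hABpos.le]
    rw [show A * B * (B / A) = B ^ 2 by field_simp]
    exact Real.sqrt_sq hBpos.le
  -- the key identity
  have harg : Real.sqrt C * (u - u₀) / 3 = μ * (u - u₀) := by
    rw [hμdef]; ring
  have hcosh : Real.cosh (μ * (u - u₀)) * (2 * Real.sqrt (A * B)) = F u := by
    have e1 : Real.exp (μ * (u - u₀)) = Real.exp (μ * u) * Real.exp (-(μ * u₀)) := by
      rw [← Real.exp_add]; congr 1; ring
    have e2 : Real.exp (-(μ * (u - u₀))) = Real.exp (-(μ * u)) * Real.exp (μ * u₀) := by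
      rw [← Real.exp_add]; congr 1; ring
    rw [Real.cosh_eq, hFsum u hu, e1, e2]
    linear_combination Real.exp (μ * u) * he1 + Real.exp (-(μ * u)) * he2
  have hcoshpos : 0 < Real.cosh (μ * (u - u₀)) := Real.cosh_pos _
  have hlogF : Real.log (F u) = φ u / 3 := by rw [hFdef]; exact Real.log_exp _
  have h5 : Real.log (Real.cosh (μ * (u - u₀))) + Real.log (2 * Real.sqrt (A * B))
      = φ u / 3 := by
    rw [← Real.log_mul hcoshpos.ne' (by positivity), hcosh, hlogF]
  rw [harg]
  linarith
end

section
/- The map X(u,v) = ((√C/3)(cosh u)³ cos 3v, (√C/3)(cosh u)³ sin 3v, (√C/2)((1/2) sinh 2u + u)) from ℝ² to ℝ³ is an isometric immersion of (ℝ², g_C) into Euclidean ℝ³, i.e., the induced metric equals C (cosh u)⁶ (du² + dv²). -/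
open Real Set

/-- the map
`X(u,v) = ((√C/3)(cosh u)³ cos 3v, (√C/3)(cosh u)³ sin 3v, (√C/2)((1/2) sinh 2u + u))`
induces on `ℝ²` exactly the metric `g_C = C (cosh u)⁶ (du² + dv²)`, i.e.
`⟨X_u,X_u⟩ = C (cosh u)⁶`, `⟨X_u,X_v⟩ = 0`, `⟨X_v,X_v⟩ = C (cosh u)⁶`. -/
theorem biconservative_immersion_R3 (C : ℝ) (hC : 0 < C)
    (X₁ X₂ X₃ : ℝ → ℝ → ℝ)
    (h₁ : ∀ u v, X₁ u v = (Real.sqrt C / 3) * (Real.cosh u) ^ 3 * Real.cos (3 * v))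
    (h₂ : ∀ u v, X₂ u v = (Real.sqrt C / 3) * (Real.cosh u) ^ 3 * Real.sin (3 * v))
    (h₃ : ∀ u v, X₃ u v = (Real.sqrt C / 2) * ((1/2) * Real.sinh (2 * u) + u)) :
    ∀ u v : ℝ,
      (deriv (fun u => X₁ u v) u) ^ 2 + (deriv (fun u => X₂ u v) u) ^ 2
          + (deriv (fun u => X₃ u v) u) ^ 2 = C * (Real.cosh u) ^ 6 ∧
      deriv (fun u => X₁ u v) u * deriv (fun v => X₁ u v) v
          + deriv (fun u => X₂ u v) u * deriv (fun v => X₂ u v) v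
          + deriv (fun u => X₃ u v) u * deriv (fun v => X₃ u v) v = 0 ∧
      (deriv (fun v => X₁ u v) v) ^ 2 + (deriv (fun v => X₂ u v) v) ^ 2
          + (deriv (fun v => X₃ u v) v) ^ 2 = C * (Real.cosh u) ^ 6 := by
  intro u v
  set s := Real.sqrt C with hsdef
  -- derivatives in u
  have hd1u : HasDerivAt (fun u => X₁ u v)
      (s * Real.cosh u ^ 2 * Real.sinh u * Real.cos (3 * v)) u := by
    have he : (fun u => X₁ u v) = fun u => (s / 3) * Real.cosh u ^ 3 * Real.cos (3 * v) :=
      funext fun u => h₁ u v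
    rw [he]
    have h := (((Real.hasDerivAt_cosh u).pow 3).const_mul (s / 3)).mul_const (Real.cos (3 * v))
    exact h.congr_deriv (by ring)
  have hd2u : HasDerivAt (fun u => X₂ u v)
      (s * Real.cosh u ^ 2 * Real.sinh u * Real.sin (3 * v)) u := by
    have he : (fun u => X₂ u v) = fun u => (s / 3) * Real.cosh u ^ 3 * Real.sin (3 * v) :=
      funext fun u => h₂ u v
    rw [he]
    have h := (((Real.hasDerivAt_cosh u).pow 3).const_mul (s / 3)).mul_const (Real.sin (3 * v))
    exact h.congr_deriv (by ring)
  have hd3u : HasDerivAt (fun u => X₃ u v) (s * Real.cosh u ^ 2) u := by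
    have he : (fun u => X₃ u v) = fun u => (s / 2) * ((1/2) * Real.sinh (2 * u) + u) :=
      funext fun u => h₃ u v
    rw [he]
    have hsin : HasDerivAt (fun u : ℝ => Real.sinh (2 * u)) (Real.cosh (2 * u) * (2 * 1)) u :=
      (Real.hasDerivAt_sinh (2 * u)).comp u ((hasDerivAt_id u).const_mul 2)
    have h := (((hsin.const_mul (1/2 : ℝ)).add (hasDerivAt_id u)).const_mul (s / 2))
    exact h.congr_deriv (by
      symm
      rw [Real.cosh_two_mul]
      linear_combination (s / 2) * Real.cosh_sq u)
  -- derivatives in v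
  have hd1v : HasDerivAt (fun v => X₁ u v)
      (-(s * Real.cosh u ^ 3 * Real.sin (3 * v))) v := by
    have he : (fun v => X₁ u v) = fun v => (s / 3) * Real.cosh u ^ 3 * Real.cos (3 * v) :=
      funext fun v => h₁ u v
    rw [he]
    have hcos : HasDerivAt (fun v : ℝ => Real.cos (3 * v)) (-Real.sin (3 * v) * (3 * 1)) v :=
      (Real.hasDerivAt_cos (3 * v)).comp v ((hasDerivAt_id v).const_mul 3)
    have h := hcos.const_mul ((s / 3) * Real.cosh u ^ 3)
    exact h.congr_deriv (by ring)
  have hd2v : HasDerivAt (fun v => X₂ u v)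
      (s * Real.cosh u ^ 3 * Real.cos (3 * v)) v := by
    have he : (fun v => X₂ u v) = fun v => (s / 3) * Real.cosh u ^ 3 * Real.sin (3 * v) :=
      funext fun v => h₂ u v
    rw [he]
    have hsin : HasDerivAt (fun v : ℝ => Real.sin (3 * v)) (Real.cos (3 * v) * (3 * 1)) v :=
      (Real.hasDerivAt_sin (3 * v)).comp v ((hasDerivAt_id v).const_mul 3)
    have h := hsin.const_mul ((s / 3) * Real.cosh u ^ 3)
    exact h.congr_deriv (by ring)
  have hd3v : deriv (fun v => X₃ u v) v = 0 := by
    have he : (fun v => X₃ u v) = fun _ => (s / 2) * ((1/2) * Real.sinh (2 * u) + u) :=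
      funext fun v => h₃ u v
    rw [he, deriv_const]
  rw [hd1u.deriv, hd2u.deriv, hd3u.deriv, hd1v.deriv, hd2v.deriv, hd3v]
  have hq : s ^ 2 = C := Real.sq_sqrt hC.le
  have hs : Real.sin (3 * v) ^ 2 + Real.cos (3 * v) ^ 2 = 1 := Real.sin_sq_add_cos_sq _
  have hc : Real.cosh u ^ 2 = Real.sinh u ^ 2 + 1 := Real.cosh_sq u
  refine ⟨?_, by ring, ?_⟩
  · linear_combination (s ^ 2 * Real.cosh u ^ 4 * Real.sinh u ^ 2) * hs
      - (s ^ 2 * Real.cosh u ^ 4) * hc + Real.cosh u ^ 6 * hq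
  · linear_combination (s ^ 2 * Real.cosh u ^ 6) * hs + Real.cosh u ^ 6 * hq
end

section
/- Let T(ξ) = −ξ^{8/3} + 3Cξ² − 3 for ξ > 0, with C > 4/3^{3/2}. Then T has exactly two positive zeros ξ₀₁ ∈ (0, (9C/4)^{3/2}) and ξ₀₂ ∈ ((9C/4)^{3/2}, ∞), and T(ξ) > 0 for all ξ ∈ (ξ₀₁, ξ₀₂). -/
open Real Set

/-- `T(ξ) = −ξ^{8/3} + 3Cξ² − 3` on `(0,∞)`, with `C > 4/3^{3/2}`, has
exactly two positive zeros `ξ₀₁ ∈ (0, (9C/4)^{3/2})` and `ξ₀₂ ∈ ((9C/4)^{3/2}, ∞)`,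
and `T > 0` on `(ξ₀₁, ξ₀₂)`. -/
theorem T_two_zeros (C : ℝ) (hC : C > 4 / (3:ℝ) ^ ((3:ℝ)/2))
    (T : ℝ → ℝ)
    (hT : ∀ ξ, T ξ = -ξ ^ ((8:ℝ)/3) + 3 * C * ξ ^ 2 - 3) :
    ∃ ξ₀₁ ξ₀₂ : ℝ,
      0 < ξ₀₁ ∧ ξ₀₁ < (9 * C / 4) ^ ((3:ℝ)/2) ∧ (9 * C / 4) ^ ((3:ℝ)/2) < ξ₀₂ ∧
      T ξ₀₁ = 0 ∧ T ξ₀₂ = 0 ∧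
      (∀ ξ ∈ Ioo ξ₀₁ ξ₀₂, 0 < T ξ) ∧
      (∀ ξ : ℝ, 0 < ξ → T ξ = 0 → ξ = ξ₀₁ ∨ ξ = ξ₀₂) := by
  obtain rfl : T = fun ξ : ℝ => -ξ ^ ((8:ℝ)/3) + 3 * C * ξ ^ 2 - 3 := funext hT
  set f : ℝ → ℝ := fun ξ : ℝ => -ξ ^ ((8:ℝ)/3) + 3 * C * ξ ^ 2 - 3 with hf
  have hC0 : 0 < C := lt_trans (by positivity) hC
  set m : ℝ := (9 * C / 4) ^ ((3:ℝ)/2) with hmdef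
  have hq0 : (0:ℝ) < 9 * C / 4 := by positivity
  have hm0 : 0 < m := rpow_pos_of_pos hq0 _
  have hm23 : m ^ ((2:ℝ)/3) = 9 * C / 4 := by
    rw [hmdef, ← Real.rpow_mul hq0.le]
    norm_num
  -- continuity
  have hcont : Continuous f := by
    have h1 : Continuous fun x : ℝ => x ^ ((8:ℝ)/3) :=
      continuous_iff_continuousAt.2 fun x =>
        Real.continuousAt_rpow_const x _ (Or.inr (by norm_num))
    exact ((h1.neg.add (continuous_const.mul (continuous_pow 2))).sub continuous_const)
  -- derivative
  have hd : ∀ x : ℝ, 0 < x →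
      HasDerivAt f (-((8:ℝ)/3 * x ^ ((5:ℝ)/3)) + 3 * C * (2 * x)) x := by
    intro x hx
    have h1 : HasDerivAt (fun y : ℝ => y ^ ((8:ℝ)/3)) ((8:ℝ)/3 * x ^ ((8:ℝ)/3 - 1)) x :=
      Real.hasDerivAt_rpow_const (Or.inl hx.ne')
    have h2 := (h1.neg.add ((hasDerivAt_pow 2 x).const_mul (3 * C))).sub_const 3
    exact h2.congr_deriv (by norm_num)
  -- split of exponent 5/3 = 1 + 2/3
  have h53 : ∀ x : ℝ, 0 < x → x ^ ((5:ℝ)/3) = x * x ^ ((2:ℝ)/3) := by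
    intro x hx
    rw [show (5:ℝ)/3 = 1 + 2/3 by norm_num, Real.rpow_add hx, Real.rpow_one]
  -- strict mono on [0, m]
  have hmono : StrictMonoOn f (Icc 0 m) := by
    apply strictMonoOn_of_deriv_pos (convex_Icc 0 m) hcont.continuousOn
    intro x hx
    rw [interior_Icc] at hx
    rw [(hd x hx.1).deriv]
    have h23 : x ^ ((2:ℝ)/3) < 9 * C / 4 := by
      rw [← hm23]
      exact Real.rpow_lt_rpow hx.1.le hx.2 (by norm_num)
    rw [h53 x hx.1]
    nlinarith [hx.1, mul_lt_mul_of_pos_left h23 hx.1]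
  -- strict anti on [m, ∞)
  have hanti : StrictAntiOn f (Ici m) := by
    apply strictAntiOn_of_deriv_neg (convex_Ici m) hcont.continuousOn
    intro x hx
    rw [interior_Ici] at hx
    have hx0 : 0 < x := lt_trans hm0 hx
    rw [(hd x hx0).deriv]
    have h23 : 9 * C / 4 < x ^ ((2:ℝ)/3) := by
      rw [← hm23]
      exact Real.rpow_lt_rpow hm0.le hx (by norm_num)
    rw [h53 x hx0]
    nlinarith [hx0, mul_lt_mul_of_pos_left h23 hx0]
  -- values
  have hf0 : f 0 = -3 := by
    simp [hf, Real.zero_rpow (by norm_num : ((8:ℝ)/3) ≠ 0)]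
  have hC4 : 256 / 729 < C ^ 4 := by
    have h3 : ((3:ℝ) ^ ((3:ℝ)/2)) ^ (4:ℕ) = 729 := by
      rw [← Real.rpow_natCast ((3:ℝ) ^ ((3:ℝ)/2)) 4, ← Real.rpow_mul (by norm_num : (0:ℝ) ≤ 3)]
      rw [show (3:ℝ)/2 * ((4:ℕ):ℝ) = ((6:ℕ):ℝ) by push_cast; ring, Real.rpow_natCast]
      norm_num
    have h32 : (0:ℝ) < (3:ℝ) ^ ((3:ℝ)/2) := rpow_pos_of_pos (by norm_num) _
    have h4 : (4 / (3:ℝ) ^ ((3:ℝ)/2)) ^ (4:ℕ) < C ^ 4 :=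
      pow_lt_pow_left₀ hC (by positivity) (by norm_num)
    rw [div_pow, h3] at h4
    calc (256:ℝ)/729 = 4^4/729 := by norm_num
    _ < C ^ 4 := h4
  have hfm : 0 < f m := by
    have hm83 : m ^ ((8:ℝ)/3) = (9 * C / 4) ^ (4:ℕ) := by
      rw [hmdef, ← Real.rpow_mul hq0.le,
        show (3:ℝ)/2 * (8/3) = ((4:ℕ):ℝ) by push_cast; ring, Real.rpow_natCast]
    have hm2 : m ^ (2:ℕ) = (9 * C / 4) ^ (3:ℕ) := by
      rw [hmdef, ← Real.rpow_natCast ((9 * C / 4) ^ ((3:ℝ)/2)) 2, ← Real.rpow_mul hq0.le,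
        show (3:ℝ)/2 * ((2:ℕ):ℝ) = ((3:ℕ):ℝ) by push_cast; ring, Real.rpow_natCast]
    simp only [hf, hm83, hm2]
    nlinarith [hC4, hC0]
  -- far point
  set b : ℝ := (3 * C) ^ ((3:ℝ)/2) + 1 with hbdef
  have h3C0 : (0:ℝ) < 3 * C := by positivity
  have hb3C : (3 * C) ^ ((3:ℝ)/2) < b := by simp [hbdef]
  have hb0 : 0 < b := lt_trans (rpow_pos_of_pos h3C0 _) hb3C
  have hmb : m < b := by
    calc m < (3 * C) ^ ((3:ℝ)/2) :=
      Real.rpow_lt_rpow hq0.le (by linarith) (by norm_num)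
    _ < b := hb3C
  have hb23 : 3 * C < b ^ ((2:ℝ)/3) := by
    have := Real.rpow_lt_rpow (rpow_pos_of_pos h3C0 ((3:ℝ)/2)).le hb3C
      (by norm_num : (0:ℝ) < 2/3)
    rwa [← Real.rpow_mul h3C0.le, show (3:ℝ)/2 * (2/3) = 1 by norm_num,
      Real.rpow_one] at this
  have hfb : f b < 0 := by
    have hb83 : b ^ ((8:ℝ)/3) = b ^ (2:ℕ) * b ^ ((2:ℝ)/3) := by
      rw [← Real.rpow_natCast b 2, ← Real.rpow_add hb0]
      norm_num
    simp only [hf, hb83]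
    nlinarith [sq_nonneg b, hb0, mul_lt_mul_of_pos_left hb23 (pow_pos hb0 2)]
  -- IVT for first zero
  obtain ⟨ξ₁, hξ₁mem, hfξ₁⟩ : ∃ x ∈ Ioo (0:ℝ) m, f x = 0 := by
    have h := intermediate_value_Ioo hm0.le hcont.continuousOn
    have : (0:ℝ) ∈ Ioo (f 0) (f m) := by rw [hf0]; exact ⟨by norm_num, hfm⟩
    obtain ⟨x, hx, hfx⟩ := h this
    exact ⟨x, hx, hfx⟩
  obtain ⟨ξ₂, hξ₂mem, hfξ₂⟩ : ∃ x ∈ Ioo m b, f x = 0 := by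
    have h := intermediate_value_Ioo' hmb.le hcont.continuousOn
    have : (0:ℝ) ∈ Ioo (f b) (f m) := ⟨hfb, hfm⟩
    obtain ⟨x, hx, hfx⟩ := h this
    exact ⟨x, hx, hfx⟩
  refine ⟨ξ₁, ξ₂, hξ₁mem.1, hξ₁mem.2, hξ₂mem.1, hfξ₁, hfξ₂, ?_, ?_⟩
  · intro ξ hξ
    rcases le_or_gt ξ m with h | h
    · have := hmono ⟨hξ₁mem.1.le, hξ₁mem.2.le⟩
        ⟨(lt_trans hξ₁mem.1 hξ.1).le, h⟩ hξ.1
      rwa [hfξ₁] at this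
    · have := hanti (le_of_lt h) (le_of_lt hξ₂mem.1) hξ.2
      rwa [hfξ₂] at this
  · intro ξ hξ0 hfξ
    rcases le_or_gt ξ m with h | h
    · left
      exact hmono.injOn ⟨hξ0.le, h⟩ ⟨hξ₁mem.1.le, hξ₁mem.2.le⟩ (by rw [hfξ, hfξ₁])
    · right
      exact hanti.injOn (le_of_lt h) (le_of_lt hξ₂mem.1) (by rw [hfξ, hfξ₂])
end

section
/- Let C > 4/3^{3/2} and 0 < C* < (C − 4/3^{3/2})^{−1/2}. Then 3ξ² − (C*)²·(−ξ^{8/3} + 3Cξ² − 3) > 0 for all ξ ∈ (ξ₀₁, ξ₀₂), where ξ₀₁ < ξ₀₂ are the positive zeros of −ξ^{8/3} + 3Cξ² − 3. -/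
open Real Set

/-- if `C > 4/3^{3/2}` and `0 < C* < (C − 4/3^{3/2})^{−1/2}`, then
`3ξ² − (C*)²(−ξ^{8/3} + 3Cξ² − 3) > 0` for all `ξ` between the positive zeros
`ξ₀₁ < ξ₀₂` of `−ξ^{8/3} + 3Cξ² − 3`. -/
theorem Cstar_inequality (C Cstar : ℝ) (hC : C > 4 / (3:ℝ) ^ ((3:ℝ)/2))
    (hCs : 0 < Cstar) (hCs' : Cstar < (C - 4 / (3:ℝ) ^ ((3:ℝ)/2)) ^ (-(1:ℝ)/2))
    (ξ₀₁ ξ₀₂ : ℝ) (h01 : 0 < ξ₀₁) (h12 : ξ₀₁ < ξ₀₂)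
    (hz1 : -ξ₀₁ ^ ((8:ℝ)/3) + 3 * C * ξ₀₁ ^ 2 - 3 = 0)
    (hz2 : -ξ₀₂ ^ ((8:ℝ)/3) + 3 * C * ξ₀₂ ^ 2 - 3 = 0)
    (hpos : ∀ ξ ∈ Ioo ξ₀₁ ξ₀₂, 0 < -ξ ^ ((8:ℝ)/3) + 3 * C * ξ ^ 2 - 3) :
    ∀ ξ ∈ Ioo ξ₀₁ ξ₀₂,
      0 < 3 * ξ ^ 2 - Cstar ^ 2 * (-ξ ^ ((8:ℝ)/3) + 3 * C * ξ ^ 2 - 3) := by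
  intro ξ hξ
  have hT := hpos ξ hξ
  have hξpos : 0 < ξ := lt_trans h01 hξ.1
  set c₀ : ℝ := 4 / (3:ℝ) ^ ((3:ℝ)/2) with hc₀def
  have hc : 0 < C - c₀ := sub_pos.mpr hC
  -- Cstar² < (C − c₀)⁻¹
  have hsq : ((C - c₀) ^ (-(1:ℝ)/2)) ^ 2 = (C - c₀)⁻¹ := by
    rw [← Real.rpow_natCast ((C - c₀) ^ (-(1:ℝ)/2)) 2, ← Real.rpow_mul hc.le,
      show (-(1:ℝ)/2 * (2:ℕ)) = -1 by norm_num, Real.rpow_neg_one]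
  have hCs2 : Cstar ^ 2 < (C - c₀)⁻¹ := by
    rw [← hsq]
    nlinarith [hCs', hCs]
  -- auxiliary: √3
  set s : ℝ := Real.sqrt 3 with hsdef
  have hs : 0 < s := Real.sqrt_pos.mpr (by norm_num)
  have hs2 : s ^ 2 = 3 := Real.sq_sqrt (by norm_num)
  have hc₀ : c₀ = 4 / (3 * s) := by
    rw [hc₀def, hsdef]
    congr 1
    rw [show ((3:ℝ)/2) = 1 + 1/2 by norm_num, Real.rpow_add (by norm_num),
      Real.rpow_one, ← Real.sqrt_eq_rpow]
  -- t = ξ^(1/3)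
  set t : ℝ := ξ ^ ((1:ℝ)/3) with htdef
  have ht : 0 < t := Real.rpow_pos_of_pos hξpos _
  have ht8 : t ^ 8 = ξ ^ ((8:ℝ)/3) := by
    rw [htdef, ← Real.rpow_natCast (ξ ^ ((1:ℝ)/3)) 8, ← Real.rpow_mul hξpos.le]
    norm_num
  have ht6 : t ^ 6 = ξ ^ 2 := by
    rw [htdef, ← Real.rpow_natCast (ξ ^ ((1:ℝ)/3)) 6, ← Real.rpow_mul hξpos.le,
      ← Real.rpow_natCast ξ 2]
    norm_num
  -- key polynomial inequality: 4 t^6 ≤ s (t^8 + 3)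
  have hpoly : 4 * t ^ 6 ≤ s * (t ^ 8 + 3) := by
    have hprod : 0 ≤ s * (t ^ 2 - s) ^ 2 * (3 * t ^ 4 + 2 * s * t ^ 2 + 3) := by
      apply mul_nonneg (mul_nonneg hs.le (sq_nonneg _))
      positivity
    have hid : s * (t ^ 2 - s) ^ 2 * (3 * t ^ 4 + 2 * s * t ^ 2 + 3)
        = 3 * s * (t ^ 8 + 3) - 12 * t ^ 6 := by
      linear_combination (-4 * t ^ 6 - s * t ^ 4 + 2 * s ^ 2 * t ^ 2 + 3 * s) * hs2
    linarith [hid ▸ hprod]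
  -- hence 3 c₀ ξ² ≤ ξ^{8/3} + 3
  have hkey : 3 * c₀ * ξ ^ 2 ≤ ξ ^ ((8:ℝ)/3) + 3 := by
    rw [hc₀, ← ht8, ← ht6]
    have heq : 3 * (4 / (3 * s)) * t ^ 6 = 4 * t ^ 6 / s := by
      field_simp
    rw [heq, div_le_iff₀ hs]
    nlinarith [hpoly]
  -- so T ≤ 3 ξ² (C − c₀)
  have hT3 : -ξ ^ ((8:ℝ)/3) + 3 * C * ξ ^ 2 - 3 ≤ 3 * ξ ^ 2 * (C - c₀) := by
    nlinarith [hkey]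
  -- conclude
  have h1 : Cstar ^ 2 * (-ξ ^ ((8:ℝ)/3) + 3 * C * ξ ^ 2 - 3)
      < (C - c₀)⁻¹ * (-ξ ^ ((8:ℝ)/3) + 3 * C * ξ ^ 2 - 3) :=
    mul_lt_mul_of_pos_right hCs2 hT
  have h2 : (C - c₀)⁻¹ * (-ξ ^ ((8:ℝ)/3) + 3 * C * ξ ^ 2 - 3) ≤ 3 * ξ ^ 2 := by
    rw [inv_mul_le_iff₀ hc]
    exact hT3.trans_eq (by ring)
  linarith
end

section
/- The Gaussian curvature of the metric g_C = 3/(ξ²(−ξ^{8/3}+3Cξ²−3)) dξ² + (1/ξ²) dθ² on D_C = (ξ₀₁,ξ₀₂) × ℝ equals K(ξ) = 1 − (1/9)ξ^{8/3}; in particular 1 − K = (1/9)ξ^{8/3} > 0, K'(ξ) = −(8/27)ξ^{5/3} < 0, and K does not depend on C. -/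
open Real Set

/-- for the metric `g_C = 3/(ξ²(−ξ^{8/3}+3Cξ²−3)) dξ² + (1/ξ²) dθ²` on
`D_C = (ξ₀₁,ξ₀₂) × ℝ`, the Gaussian curvature, computed by the orthogonal-metric formula
`K = −(1/(2√(EG))) d/dξ (G'/√(EG))`, equals `1 − ξ^{8/3}/9`; hence `1 − K = ξ^{8/3}/9 > 0`
and `K'(ξ) = −(8/27)ξ^{5/3} < 0` (independently of `C`). -/
theorem gC_sphere_curvature (C : ℝ) (hC : C > 4 / (3:ℝ) ^ ((3:ℝ)/2))
    (ξ₀₁ ξ₀₂ : ℝ) (h01 : 0 < ξ₀₁) (h12 : ξ₀₁ < ξ₀₂)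
    (hz1 : -ξ₀₁ ^ ((8:ℝ)/3) + 3 * C * ξ₀₁ ^ 2 - 3 = 0)
    (hz2 : -ξ₀₂ ^ ((8:ℝ)/3) + 3 * C * ξ₀₂ ^ 2 - 3 = 0)
    (hpos : ∀ ξ ∈ Ioo ξ₀₁ ξ₀₂, 0 < -ξ ^ ((8:ℝ)/3) + 3 * C * ξ ^ 2 - 3)
    (E G K : ℝ → ℝ)
    (hE : ∀ ξ, E ξ = 3 / (ξ ^ 2 * (-ξ ^ ((8:ℝ)/3) + 3 * C * ξ ^ 2 - 3)))
    (hG : ∀ ξ, G ξ = 1 / ξ ^ 2)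
    (hK : ∀ ξ, K ξ = -(1 / (2 * Real.sqrt (E ξ * G ξ))) *
      deriv (fun ξ => deriv G ξ / Real.sqrt (E ξ * G ξ)) ξ) :
    ∀ ξ ∈ Ioo ξ₀₁ ξ₀₂,
      K ξ = 1 - ξ ^ ((8:ℝ)/3) / 9 ∧
      0 < 1 - K ξ ∧
      deriv K ξ = -(8/27) * ξ ^ ((5:ℝ)/3) ∧
      deriv K ξ < 0 := by
  set P : ℝ → ℝ := fun x => -x ^ ((8:ℝ)/3) + 3 * C * x ^ 2 - 3 with hPdef
  have ht : (0:ℝ) < Real.sqrt 3 := Real.sqrt_pos.mpr (by norm_num)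
  have htt : Real.sqrt 3 * Real.sqrt 3 = 3 := Real.mul_self_sqrt (by norm_num)
  -- √(E G) computation
  have hsqrt : ∀ x ∈ Ioo ξ₀₁ ξ₀₂,
      Real.sqrt (E x * G x) = Real.sqrt 3 / (x ^ 2 * Real.sqrt (P x)) := by
    intro x hx
    have hx0 : 0 < x := h01.trans hx.1
    have hPx : 0 < P x := hpos x hx
    have hsP : 0 < Real.sqrt (P x) := Real.sqrt_pos.mpr hPx
    have h1 : E x * G x = (Real.sqrt 3 / (x ^ 2 * Real.sqrt (P x))) ^ 2 := by
      rw [hE, hG, div_pow, mul_pow, Real.sq_sqrt (by norm_num : (0:ℝ) ≤ 3),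
        Real.sq_sqrt hPx.le]
      field_simp
      have hPx' : P x = -3 - x ^ ((8:ℝ)/3) + x ^ 2 * C * 3 := by simp only [hPdef]; ring
      have hne : -x ^ ((8:ℝ)/3) + 3 * x ^ 2 * C - 3 ≠ 0 := by
        rw [hPx'] at hPx; exact (by linarith : (0:ℝ) < -x ^ ((8:ℝ)/3) + 3 * x ^ 2 * C - 3).ne'
      rw [div_eq_one_iff_eq hne, hPx']; ring
    rw [h1, Real.sqrt_sq (by positivity)]
  -- the inner function equals a nice model on the interval
  have hFeq : ∀ x ∈ Ioo ξ₀₁ ξ₀₂,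
      deriv G x / Real.sqrt (E x * G x) = -2 / Real.sqrt 3 * (Real.sqrt (P x) / x) := by
    intro x hx
    have hx0 : 0 < x := h01.trans hx.1
    have hPx : 0 < P x := hpos x hx
    have hsP : 0 < Real.sqrt (P x) := Real.sqrt_pos.mpr hPx
    have hGf : G = fun y : ℝ => (y ^ 2)⁻¹ := funext fun y => by rw [hG, one_div]
    have hG' : deriv G x = -(2 * x) / (x ^ 2) ^ 2 := by
      have h := (hasDerivAt_pow 2 x).inv (pow_ne_zero 2 hx0.ne')
      rw [hGf]
      have h' := h.deriv
      simp at h'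
      exact h'
    rw [hG', hsqrt x hx]
    field_simp
  have key : ∀ x ∈ Ioo ξ₀₁ ξ₀₂, K x = 1 - x ^ ((8:ℝ)/3) / 9 := by
    intro ξ hξ
    have hξ0 : 0 < ξ := h01.trans hξ.1
    have hPξ : 0 < P ξ := hpos ξ hξ
    have hsP : 0 < Real.sqrt (P ξ) := Real.sqrt_pos.mpr hPξ
    have h53 : ((8:ℝ)/3 - 1) = (5:ℝ)/3 := by norm_num
    have h1 : HasDerivAt (fun x : ℝ => x ^ ((8:ℝ)/3)) (8/3 * ξ ^ ((5:ℝ)/3)) ξ := by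
      have h := Real.hasDerivAt_rpow_const (x := ξ) (p := (8:ℝ)/3) (Or.inl hξ0.ne')
      rw [h53] at h; exact h
    have hP' : HasDerivAt P (-(8/3 * ξ ^ ((5:ℝ)/3)) + 3 * C * (2 * ξ ^ 1)) ξ := by
      have h2 := hasDerivAt_pow 2 ξ
      have := (h1.neg.add ((h2.const_mul (3 * C)))).sub_const 3
      simpa [hPdef] using this
    have hf : HasDerivAt (fun x => -2 / Real.sqrt 3 * (Real.sqrt (P x) / x))
        (-2 / Real.sqrt 3 *
          (((-(8/3 * ξ ^ ((5:ℝ)/3)) + 3 * C * (2 * ξ ^ 1)) / (2 * Real.sqrt (P ξ)) * ξ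
            - Real.sqrt (P ξ) * 1) / ξ ^ 2)) ξ :=
      HasDerivAt.const_mul _ ((hP'.sqrt hPξ.ne').div (hasDerivAt_id ξ) hξ0.ne')
    have hev : (fun x => deriv G x / Real.sqrt (E x * G x)) =ᶠ[nhds ξ]
        (fun x => -2 / Real.sqrt 3 * (Real.sqrt (P x) / x)) := by
      filter_upwards [isOpen_Ioo.mem_nhds hξ] with x hx using hFeq x hx
    have hder : deriv (fun x => deriv G x / Real.sqrt (E x * G x)) ξ =
        -2 / Real.sqrt 3 *
          (((-(8/3 * ξ ^ ((5:ℝ)/3)) + 3 * C * (2 * ξ ^ 1)) / (2 * Real.sqrt (P ξ)) * ξ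
            - Real.sqrt (P ξ) * 1) / ξ ^ 2) := by
      rw [hev.deriv_eq, hf.deriv]
    have hss : Real.sqrt (P ξ) * Real.sqrt (P ξ) = P ξ := Real.mul_self_sqrt hPξ.le
    have hPx : P ξ = -ξ ^ ((8:ℝ)/3) + 3 * C * ξ ^ 2 - 3 := rfl
    have hba : ξ ^ ((5:ℝ)/3) * ξ = ξ ^ ((8:ℝ)/3) := by
      rw [← Real.rpow_add_one hξ0.ne' ((5:ℝ)/3)]; norm_num
    rw [hK, hder, hsqrt ξ hξ]
    field_simp
    linear_combination (-72) * hba + (-54) * hss + (-54) * hPx +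
      (6 * ξ ^ ((8:ℝ)/3) - 54) * htt
  intro ξ hξ
  have hξ0 : 0 < ξ := h01.trans hξ.1
  have ha : 0 < ξ ^ ((8:ℝ)/3) := Real.rpow_pos_of_pos hξ0 _
  have hb : 0 < ξ ^ ((5:ℝ)/3) := Real.rpow_pos_of_pos hξ0 _
  have hKval := key ξ hξ
  have h53 : ((8:ℝ)/3 - 1) = (5:ℝ)/3 := by norm_num
  have h1 : HasDerivAt (fun x : ℝ => x ^ ((8:ℝ)/3)) (8/3 * ξ ^ ((5:ℝ)/3)) ξ := by
    have h := Real.hasDerivAt_rpow_const (x := ξ) (p := (8:ℝ)/3) (Or.inl hξ0.ne')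
    rw [h53] at h; exact h
  have hmod : HasDerivAt (fun x : ℝ => 1 - x ^ ((8:ℝ)/3) / 9) (-(8/27) * ξ ^ ((5:ℝ)/3)) ξ := by
    have := (h1.div_const 9).const_sub 1
    refine this.congr_deriv ?_
    ring
  have hKev : K =ᶠ[nhds ξ] fun x => 1 - x ^ ((8:ℝ)/3) / 9 := by
    filter_upwards [isOpen_Ioo.mem_nhds hξ] with x hx using key x hx
  have hdK : deriv K ξ = -(8/27) * ξ ^ ((5:ℝ)/3) := by
    rw [hKev.deriv_eq, hmod.deriv]
  exact ⟨hKval, by rw [hKval]; linarith, hdK, by rw [hdK]; nlinarith⟩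
end
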